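/- Let M be a matroid on a finite ground set E, let k ≥ 1 be an integer, and let N be the extended k-fold union of M, with rank function rank_N and closure (span) operator closure_N. For any fixed e ∈ E, define occ_e(S) = k − rank_N(S ∪ ({e} × [k])) + rank_N(S) for S ⊆ E × [k]. Then for every (e,i) ∈ E × [k] and every S ⊆ E × [k], if occ_e(S) < k then (e,i) ∉ closure_N(S \ {(e,i)}). -/

import Mathlib

/-- The rank of a set `S` in a matroid `M`: the maximum cardinality of an
independent subset of `S`. -/
noncomputable def matroidRank {α : Type*} (M : Matroid α) (S : Set α) : ℕ :=
  sSup {r | ∃ I : Set α, I ⊆ S ∧ M.Indep I ∧ I.ncard = r}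

/-- The span (closure) of a set `S` in a matroid `M`: the elements whose addition
does not increase the rank. -/
noncomputable def matroidSpan {α : Type*} (M : Matroid α) (S : Set α) : Set α :=
  {a | matroidRank M (S ∪ {a}) = matroidRank M S}

/-- The independence predicate of the extended `k`-fold union of `M`: a set
`S ⊆ E × [k]` is independent iff it is a union `S₁ ∪ ⋯ ∪ S_k` where each `S_j`
has pairwise distinct first coordinates and the set of first coordinates of `S_j`
is independent in `M`. -/
def ExtendedIndep {α : Type*} (M : Matroid α) (k : ℕ) (S : Set (α × Fin k)) : Prop :=
  ∃ Ss : Fin k → Set (α × Fin k),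
    S = ⋃ j, Ss j ∧
    ∀ j, Set.InjOn Prod.fst (Ss j) ∧ M.Indep (Prod.fst '' Ss j)

/-- The occupancy function `occ_e(S) = k − rank_N(S ∪ ({e} × [k])) + rank_N(S)`,
valued in `ℤ`. -/
noncomputable def occ {α : Type*} {k : ℕ} (N : Matroid (α × Fin k)) (e : α)
    (S : Set (α × Fin k)) : ℤ :=
  (k : ℤ) - matroidRank N (S ∪ ({e} ×ˢ (Set.univ : Set (Fin k)))) + matroidRank N S

open Set

section Aux

variable {β : Type*} {N : Matroid β} {X Y J : Set β}

private lemma rankSet_nonempty (N : Matroid β) (X : Set β) :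
    {r | ∃ I : Set β, I ⊆ X ∧ N.Indep I ∧ I.ncard = r}.Nonempty :=
  ⟨0, ∅, empty_subset X, N.empty_indep, Set.ncard_empty β⟩

private lemma rankSet_bddAbove (hE : N.E.Finite) (X : Set β) :
    BddAbove {r | ∃ I : Set β, I ⊆ X ∧ N.Indep I ∧ I.ncard = r} := by
  refine ⟨N.E.ncard, ?_⟩
  rintro r ⟨I, hIX, hI, rfl⟩
  exact Set.ncard_le_ncard hI.subset_ground hE

private lemma matroidRank_mono (hE : N.E.Finite) (h : X ⊆ Y) :
    matroidRank N X ≤ matroidRank N Y :=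
  csSup_le_csSup (rankSet_bddAbove hE Y) (rankSet_nonempty N X)
    (by rintro r ⟨I, hIX, hI, rfl⟩; exact ⟨I, hIX.trans h, hI, rfl⟩)

private lemma matroidRank_eq_of_basis' (hE : N.E.Finite) (hJ : N.IsBasis' J X) :
    matroidRank N X = J.ncard := by
  have hJfin : J.Finite := hE.subset hJ.indep.subset_ground
  apply le_antisymm
  · apply csSup_le (rankSet_nonempty N X)
    rintro r ⟨I, hIX, hI, rfl⟩
    by_contra hlt
    push_neg at hlt
    have hIfin : I.Finite := hE.subset hI.subset_ground
    have hcard : J.encard < I.encard := by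
      rw [← hJfin.cast_ncard_eq, ← hIfin.cast_ncard_eq]
      exact_mod_cast hlt
    obtain ⟨x, hx, hins⟩ := hJ.indep.augment hI hcard
    have := hJ.eq_of_subset_indep hins (subset_insert x J)
      (insert_subset (hIX hx.1) hJ.subset)
    exact hx.2 (by rw [this]; exact mem_insert x J)
  · exact le_csSup (rankSet_bddAbove hE X) ⟨J, hJ.subset, hJ.indep, rfl⟩

private lemma mem_closure_of_rank_eq (hE : N.E.Finite) {x : β} (hx : x ∈ N.E)
    (h : matroidRank N (X ∪ {x}) = matroidRank N X) : x ∈ N.closure X := by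
  obtain ⟨J, hJ⟩ := N.exists_isBasis' X
  obtain ⟨J', hJ', hJJ'⟩ := hJ.indep.subset_isBasis'_of_subset
    (hJ.subset.trans subset_union_left)
  have h1 := matroidRank_eq_of_basis' hE hJ
  have h2 := matroidRank_eq_of_basis' hE hJ'
  have hJ'fin : J'.Finite := hE.subset hJ'.indep.subset_ground
  have hle : J'.ncard ≤ J.ncard := by rw [← h1, ← h2, h]
  have hJJ : J = J' := hJ'fin.eq_of_subset_of_encard_le' hJJ' (by
    rw [← hJ'fin.cast_ncard_eq, ← (hE.subset hJ.indep.subset_ground).cast_ncard_eq]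
    exact_mod_cast hle)
  have hclx : x ∈ N.closure (X ∪ {x}) :=
    N.inter_ground_subset_closure (X ∪ {x}) ⟨Or.inr rfl, hx⟩
  rwa [← hJ'.closure_eq_closure, ← hJJ, hJ.closure_eq_closure] at hclx

private lemma matroidRank_union_eq_of_subset_closure (hE : N.E.Finite)
    (hY : Y ⊆ N.closure X) : matroidRank N (X ∪ Y) = matroidRank N X := by
  obtain ⟨J, hJ⟩ := N.exists_isBasis' X
  have hcl : N.closure (X ∪ Y) = N.closure X := by
    apply subset_antisymm
    · rw [← N.closure_inter_ground (X ∪ Y)]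
      apply Matroid.closure_subset_closure_of_subset_closure
      rintro a ⟨ha | ha, haE⟩
      · exact N.inter_ground_subset_closure X ⟨ha, haE⟩
      · exact hY ha
    · exact N.closure_subset_closure subset_union_left
  have hJ2 : N.IsBasis' J (X ∪ Y) := by
    rw [Matroid.isBasis'_iff_isBasis_closure] at hJ ⊢
    exact ⟨hcl ▸ hJ.1, hJ.2.trans subset_union_left⟩
  rw [matroidRank_eq_of_basis' hE hJ2, matroidRank_eq_of_basis' hE hJ]

private lemma matroidRank_image_eq (hE : N.E.Finite) {τ : β → β}
    (hinv : Function.Involutive τ)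
    (hInd : ∀ I, N.Indep (τ '' I) ↔ N.Indep I) (X : Set β) :
    matroidRank N (τ '' X) = matroidRank N X := by
  have himg : ∀ A : Set β, τ '' (τ '' A) = A := by
    intro A; rw [← image_comp, hinv.comp_self, image_id]
  unfold matroidRank
  congr 1
  ext r
  constructor
  · rintro ⟨I, hIX, hI, rfl⟩
    refine ⟨τ '' I, ?_, (hInd I).mpr hI, ?_⟩
    · have : τ '' I ⊆ τ '' (τ '' X) := image_mono hIX; rwa [himg] at this
    · exact Set.ncard_image_of_injective I hinv.injective
  · rintro ⟨I, hIX, hI, rfl⟩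
    exact ⟨τ '' I, image_mono hIX, (hInd I).mpr hI,
      Set.ncard_image_of_injective I hinv.injective⟩

end Aux

/-- If `occ_e(S) < k`, then `(e,i)` is not spanned by `S \ {(e,i)}` in the extended
`k`-fold union. -/
theorem occ_lt_not_spanned {α : Type*} (M : Matroid α) (hfin : M.E.Finite)
    (k : ℕ) (hk : 1 ≤ k)
    (N : Matroid (α × Fin k)) (hNE : N.E = M.E ×ˢ (Set.univ : Set (Fin k)))
    (hN : ∀ S : Set (α × Fin k), N.Indep S ↔ ExtendedIndep M k S)
    (e : α) (he : e ∈ M.E) (i : Fin k)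
    (S : Set (α × Fin k)) (hS : S ⊆ M.E ×ˢ (Set.univ : Set (Fin k)))
    (hocc : occ N e S < (k : ℤ)) :
    (e, i) ∉ matroidSpan N (S \ {(e, i)}) := by
  classical
  intro hmem
  simp only [matroidSpan, mem_setOf_eq] at hmem
  set S' := S \ {(e, i)} with hS'
  have hE : N.E.Finite := by rw [hNE]; exact hfin.prod (finite_univ)
  have hei : (e, i) ∈ N.E := by rw [hNE]; exact ⟨he, mem_univ i⟩
  have hall : ∀ j : Fin k, (e, j) ∈ N.closure S' := by
    intro j
    have hej : (e, j) ∈ N.E := by rw [hNE]; exact ⟨he, mem_univ j⟩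
    by_cases hjS : (e, j) ∈ S'
    · exact N.inter_ground_subset_closure S' ⟨hjS, hej⟩
    · set τ : α × Fin k → α × Fin k :=
        fun p => if p.1 = e then (p.1, Equiv.swap i j p.2) else p with hτ
      have hτ_yes : ∀ m : Fin k, τ (e, m) = (e, Equiv.swap i j m) := by
        intro m; simp [hτ]
      have hτ_no : ∀ p : α × Fin k, p.1 ≠ e → τ p = p := by
        intro p hp; simp [hτ, hp]
      have hinv : Function.Involutive τ := by
        rintro ⟨a, m⟩
        by_cases hp : a = e
        · rw [hp, hτ_yes, hτ_yes, Equiv.swap_apply_self]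
        · simp only [hτ_no (a, m) hp]
      have hfst : ∀ p, (τ p).1 = p.1 := by
        rintro ⟨a, m⟩
        by_cases hp : a = e
        · rw [hp, hτ_yes]
        · rw [hτ_no _ hp]
      have hImgFst : ∀ A : Set (α × Fin k), Prod.fst '' (τ '' A) = Prod.fst '' A := by
        intro A
        rw [← image_comp]
        exact image_congr fun p _ => hfst p
      have hIndImp : ∀ I, ExtendedIndep M k I → ExtendedIndep M k (τ '' I) := by
        rintro I ⟨Ss, rfl, hSs⟩
        refine ⟨fun m => τ '' Ss m, by rw [image_iUnion], fun m => ⟨?_, ?_⟩⟩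
        · rintro _ ⟨a, ha, rfl⟩ _ ⟨b, hb, rfl⟩ hab
          have hab' : a.1 = b.1 := by rw [← hfst a, ← hfst b]; exact hab
          rw [(hSs m).1 ha hb hab']
        · rw [hImgFst]; exact (hSs m).2
      have hImgInv : ∀ A : Set (α × Fin k), τ '' (τ '' A) = A := by
        intro A; rw [← image_comp, hinv.comp_self, image_id]
      have hInd : ∀ I, N.Indep (τ '' I) ↔ N.Indep I := by
        intro I
        rw [hN, hN]
        constructor
        · intro h; have := hIndImp _ h; rwa [hImgInv] at this
        · exact hIndImp I
      have hr := matroidRank_image_eq hE hinv hInd (S' ∪ {(e, i)})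
      have himg : τ '' (S' ∪ {(e, i)}) = S' ∪ {(e, j)} := by
        rw [image_union]
        congr 1
        · rw [show τ '' S' = id '' S' from image_congr ?_, image_id]
          rintro ⟨a, m⟩ hp
          by_cases hp' : a = e
          · have hmi : m ≠ i := fun h => hp.2 (by rw [hp', h]; rfl)
            have hmj : m ≠ j := fun h => hjS (by rw [← hp', ← h]; exact hp)
            rw [hp', hτ_yes, Equiv.swap_apply_of_ne_of_ne hmi hmj]; rfl
          · exact hτ_no _ hp'
        · rw [image_singleton, hτ_yes, Equiv.swap_apply_left]
      rw [himg] at hr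
      exact mem_closure_of_rank_eq hE hej (hr.trans hmem)
  have hEe : ({e} ×ˢ (univ : Set (Fin k)) : Set (α × Fin k)) ⊆ N.closure S' := by
    rintro ⟨a, j⟩ ⟨ha, -⟩
    obtain rfl : a = e := ha
    exact hall j
  have hrEe : matroidRank N (S' ∪ {e} ×ˢ (univ : Set (Fin k))) = matroidRank N S' :=
    matroidRank_union_eq_of_subset_closure hE hEe
  have hSu : S ∪ {e} ×ˢ (univ : Set (Fin k)) = S' ∪ {e} ×ˢ (univ : Set (Fin k)) := by
    ext p
    constructor
    · rintro (hp | hp)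
      · by_cases hpe : p = (e, i)
        · exact Or.inr (by rw [hpe]; exact ⟨rfl, mem_univ i⟩)
        · exact Or.inl ⟨hp, hpe⟩
      · exact Or.inr hp
    · rintro (hp | hp)
      · exact Or.inl hp.1
      · exact Or.inr hp
  have hS'S : matroidRank N S' ≤ matroidRank N S := matroidRank_mono hE diff_subset
  have hSle : matroidRank N S ≤ matroidRank N S' := by
    have hsub : S ⊆ S' ∪ {(e, i)} := by
      intro p hp
      by_cases hpe : p = (e, i)
      · exact Or.inr hpe
      · exact Or.inl ⟨hp, hpe⟩
    calc matroidRank N S ≤ matroidRank N (S' ∪ {(e, i)}) := matroidRank_mono hE hsub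
    _ = matroidRank N S' := hmem
  have hr2 : matroidRank N (S ∪ {e} ×ˢ (univ : Set (Fin k))) = matroidRank N S := by
    rw [hSu, hrEe]
    omega
  unfold occ at hocc
  rw [hr2] at hocc
  omega
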